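/- Let G be a connected simple graph on n vertices whose complement is disconnected, and let W(G) be its Wiener index. Then DLS(G) ≥ (2W(G) − n(n−1))/n, with equality if and only if G is the complete graph K_n. -/
import Mathlib


open Finset Matrix Polynomial

/-- The transmission `Tr(v)` of a vertex `v`: the sum of the distances from `v`
to all other vertices of the graph. -/
noncomputable def transm {n : ℕ} (G : SimpleGraph (Fin n)) (v : Fin n) : ℝ :=
  ∑ u : Fin n, (G.dist v u : ℝ)

/-- The distance Laplacian matrix `D^L(G) = Diag(Tr) - D(G)` of a graph `G`. -/
noncomputable def distLap {n : ℕ} (G : SimpleGraph (Fin n)) : Matrix (Fin n) (Fin n) ℝ :=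
  Matrix.diagonal (transm G) - Matrix.of (fun u v : Fin n => (G.dist u v : ℝ))

/-- `IsDLSpec G μ` says that `μ 0 , μ 1 , …, μ (n-1)` are exactly the eigenvalues
(with multiplicity) of the distance Laplacian matrix of `G`; combined with `Antitone μ`
this means `μ ⟨i-1,_⟩ = ∂_i^L(G)` in the usual decreasing ordering. -/
def IsDLSpec {n : ℕ} (G : SimpleGraph (Fin n)) (μ : Fin n → ℝ) : Prop :=
  (distLap G).charpoly = ∏ i : Fin n, (X - C (μ i))

/-- The Wiener index `W(G) = (1/2) ∑_v Tr(v)`. -/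
noncomputable def wiener {n : ℕ} (G : SimpleGraph (Fin n)) : ℝ :=
  (∑ v : Fin n, transm G v) / 2

/-- The maximum transmission `Tr_max(G) = max_v Tr(v)`. -/
noncomputable def trMax {n : ℕ} (G : SimpleGraph (Fin n)) : ℝ :=
  ⨆ v : Fin n, transm G v

lemma eval_charpoly' {m : ℕ} (M : Matrix (Fin m) (Fin m) ℝ) (r : ℝ) :
    M.charpoly.eval r = (r • (1 : Matrix (Fin m) (Fin m) ℝ) - M).det := by
  rw [Matrix.charpoly, ← Polynomial.coe_evalRingHom, RingHom.map_det]
  congr 1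
  ext i j
  by_cases h : i = j
  · subst h
    simp [Matrix.charmatrix_apply_eq, Matrix.one_apply]
  · simp [Matrix.charmatrix_apply_ne _ _ _ h, Matrix.one_apply, h]

lemma root_iff_eigen {m : ℕ} (M : Matrix (Fin m) (Fin m) ℝ) (r : ℝ) :
    M.charpoly.eval r = 0 ↔ ∃ x : Fin m → ℝ, x ≠ 0 ∧ M *ᵥ x = r • x := by
  rw [eval_charpoly', ← Matrix.exists_mulVec_eq_zero_iff]
  simp only [Matrix.sub_mulVec, Matrix.smul_mulVec, Matrix.one_mulVec, sub_eq_zero]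
  constructor
  · rintro ⟨x, hx, h⟩; exact ⟨x, hx, h.symm⟩
  · rintro ⟨x, hx, h⟩; exact ⟨x, hx, h.symm⟩

lemma trace_distLap {n : ℕ} (G : SimpleGraph (Fin n)) :
    (distLap G).trace = ∑ v, transm G v := by
  simp [Matrix.trace, Matrix.diag, distLap, SimpleGraph.dist_self]

lemma sum_mu {n : ℕ} (hn : 0 < n) (G : SimpleGraph (Fin n)) (μ : Fin n → ℝ)
    (hμ : IsDLSpec G μ) : ∑ i, μ i = ∑ v, transm G v := by
  haveI : Nonempty (Fin n) := ⟨⟨0, hn⟩⟩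
  have h1 := Matrix.trace_eq_neg_charpoly_coeff (distLap G)
  rw [hμ] at h1
  have h2 := Polynomial.prod_X_sub_C_coeff_card_pred univ μ (by simpa using hn)
  rw [Finset.card_univ, Fintype.card_fin] at h2
  rw [Fintype.card_fin] at h1
  rw [h2] at h1
  rw [trace_distLap] at h1
  linarith [h1]

lemma exists_mu_eq {n : ℕ} (G : SimpleGraph (Fin n)) (μ : Fin n → ℝ)
    (hμ : IsDLSpec G μ) (r : ℝ)
    (h : ∃ x : Fin n → ℝ, x ≠ 0 ∧ distLap G *ᵥ x = r • x) : ∃ i, μ i = r := by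
  have h0 := (root_iff_eigen _ r).mpr h
  rw [hμ] at h0
  simp only [eval_prod, eval_sub, eval_X, eval_C] at h0
  obtain ⟨i, -, hi⟩ := Finset.prod_eq_zero_iff.mp h0
  exact ⟨i, by linarith⟩

lemma eigen_of_mu {n : ℕ} (G : SimpleGraph (Fin n)) (μ : Fin n → ℝ)
    (hμ : IsDLSpec G μ) (i : Fin n) :
    ∃ x : Fin n → ℝ, x ≠ 0 ∧ distLap G *ᵥ x = μ i • x := by
  apply (root_iff_eigen _ _).mp
  rw [hμ]
  simp only [eval_prod, eval_sub, eval_X, eval_C]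
  exact Finset.prod_eq_zero (mem_univ i) (by ring)

lemma distLap_mulVec_one {n : ℕ} (G : SimpleGraph (Fin n)) :
    distLap G *ᵥ (fun _ => (1:ℝ)) = (0:ℝ) • (fun _ => (1:ℝ)) := by
  funext a
  simp only [distLap, Matrix.sub_mulVec, Pi.sub_apply, Matrix.mulVec_diagonal,
    Pi.smul_apply, smul_eq_mul, zero_mul]
  simp only [Matrix.mulVec, dotProduct, Matrix.of_apply, mul_one]
  rw [show transm G a = ∑ u : Fin n, (G.dist a u : ℝ) from rfl]
  ring

lemma exists_eigen_n {n : ℕ} (G : SimpleGraph (Fin n)) (hG : G.Connected)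
    (hc : ¬ Gᶜ.Connected) :
    ∃ x : Fin n → ℝ, x ≠ 0 ∧ distLap G *ᵥ x = (n:ℝ) • x := by
  classical
  obtain ⟨u, v, huv⟩ : ∃ u v : Fin n, ¬ Gᶜ.Reachable u v := by
    by_contra h
    push_neg at h
    exact hc ((SimpleGraph.connected_iff Gᶜ).mpr ⟨h, hG.nonempty⟩)
  set S : Finset (Fin n) := univ.filter (fun x => Gᶜ.Reachable u x) with hS
  set Sc : Finset (Fin n) := univ.filter (fun x => ¬ Gᶜ.Reachable u x) with hSc
  set s : ℝ := (S.card : ℝ) with hs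
  set w : Fin n → ℝ := fun x => if Gᶜ.Reachable u x then (n:ℝ) - s else -s with hw
  have hu : u ∈ S := by
    simp only [hS, Finset.mem_filter, Finset.mem_univ, true_and]
    exact SimpleGraph.Reachable.refl u
  have hs1 : (1:ℝ) ≤ s := by
    have := Finset.card_pos.mpr ⟨u, hu⟩
    rw [hs]; exact_mod_cast this
  have hadj : ∀ x y : Fin n, Gᶜ.Reachable u x → ¬ Gᶜ.Reachable u y → G.Adj x y := by
    intro x y hx hy
    by_contra hna
    have hxy : x ≠ y := fun h => hy (h ▸ hx)
    exact hy (hx.trans (SimpleGraph.Adj.reachable ((SimpleGraph.compl_adj G x y).mpr ⟨hxy, hna⟩)))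
  have hcards : S.card + Sc.card = n := by
    have := Finset.card_filter_add_card_filter_not
      (s := (univ : Finset (Fin n))) (p := fun x => Gᶜ.Reachable u x)
    simpa [hS, hSc] using this
  refine ⟨w, ?_, ?_⟩
  · intro h
    have hv := congrFun h v
    rw [hw] at hv
    simp only [if_neg huv, Pi.zero_apply] at hv
    linarith
  · funext a
    have hsplit : transm G a
        = (∑ y ∈ S, (G.dist a y : ℝ)) + ∑ y ∈ Sc, (G.dist a y : ℝ) := by
      rw [show transm G a = ∑ y : Fin n, (G.dist a y : ℝ) from rfl, hS, hSc]
      exact (Finset.sum_filter_add_sum_filter_not univ _ _).symm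
    have hmv : (distLap G *ᵥ w) a = transm G a * w a - ∑ y : Fin n, (G.dist a y : ℝ) * w y := by
      simp only [distLap, Matrix.sub_mulVec, Pi.sub_apply, Matrix.mulVec_diagonal]
      simp only [Matrix.mulVec, dotProduct, Matrix.of_apply]
    have hsum : ∑ y : Fin n, (G.dist a y : ℝ) * w y
        = (∑ y ∈ S, (G.dist a y : ℝ)) * ((n:ℝ) - s)
          + (∑ y ∈ Sc, (G.dist a y : ℝ)) * (-s) := by
      rw [← Finset.sum_filter_add_sum_filter_not univ (fun x => Gᶜ.Reachable u x)
        (fun y => (G.dist a y : ℝ) * w y)]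
      rw [Finset.sum_mul, Finset.sum_mul]
      congr 1
      · apply Finset.sum_congr (by rw [hS]) ?_
        intro y hy
        rw [Finset.mem_filter] at hy
        rw [hw]; simp only [if_pos hy.2]
      · apply Finset.sum_congr (by rw [hSc]) ?_
        intro y hy
        rw [Finset.mem_filter] at hy
        rw [hw]; simp only [if_neg hy.2]
    rw [hmv, hsum]
    by_cases ha : Gᶜ.Reachable u a
    · have hB : ∑ y ∈ Sc, (G.dist a y : ℝ) = (n:ℝ) - s := by
        have h1 : ∀ y ∈ Sc, (G.dist a y : ℝ) = 1 := by
          intro y hy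
          rw [hSc, Finset.mem_filter] at hy
          rw [SimpleGraph.dist_eq_one_iff_adj.mpr (hadj a y ha hy.2)]
          norm_num
        rw [Finset.sum_congr rfl h1, Finset.sum_const, nsmul_eq_mul, mul_one]
        have : (Sc.card : ℝ) = (n:ℝ) - s := by
          rw [hs]
          have : (S.card : ℝ) + (Sc.card : ℝ) = (n : ℝ) := by exact_mod_cast hcards
          linarith
        exact this
      have hwa : w a = (n:ℝ) - s := by rw [hw]; simp [ha]
      rw [hsplit, hB, hwa]
      show _ = (n:ℝ) * w a
      rw [hwa]
      ring
    · have hA : ∑ y ∈ S, (G.dist a y : ℝ) = s := by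
        have h1 : ∀ y ∈ S, (G.dist a y : ℝ) = 1 := by
          intro y hy
          rw [hS, Finset.mem_filter] at hy
          rw [SimpleGraph.dist_eq_one_iff_adj.mpr ((hadj y a hy.2 ha).symm)]
          norm_num
        rw [Finset.sum_congr rfl h1, Finset.sum_const, nsmul_eq_mul, mul_one, hs]
      have hwa : w a = -s := by rw [hw]; simp [ha]
      rw [hsplit, hA, hwa]
      show _ = (n:ℝ) * w a
      rw [hwa]
      ring

lemma ite_sum_eq {n : ℕ} (v : Fin n) :
    ∑ u : Fin n, (if v = u then (0:ℝ) else 1) = (n:ℝ) - 1 := by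
  have h2 : ∀ u : Fin n, (if v = u then (0:ℝ) else 1) = 1 - (if v = u then 1 else 0) := by
    intro u; split <;> ring
  rw [Finset.sum_congr rfl fun u _ => h2 u, Finset.sum_sub_distrib, Finset.sum_const,
    Finset.sum_ite_eq, if_pos (mem_univ v), Finset.card_univ, Fintype.card_fin,
    nsmul_eq_mul, mul_one]

lemma transm_ge {n : ℕ} {G : SimpleGraph (Fin n)} (hG : G.Connected) (v : Fin n) :
    (n:ℝ) - 1 ≤ transm G v := by
  have h : ∀ u : Fin n, (if v = u then (0:ℝ) else 1) ≤ (G.dist v u : ℝ) := by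
    intro u
    by_cases h : v = u
    · simp [h]
    · simp only [if_neg h]
      exact_mod_cast hG.pos_dist_of_ne h
  calc (n:ℝ) - 1 = ∑ u : Fin n, (if v = u then (0:ℝ) else 1) := (ite_sum_eq v).symm
    _ ≤ ∑ u : Fin n, (G.dist v u : ℝ) := Finset.sum_le_sum (fun u _ => h u)
    _ = transm G v := rfl

lemma sum_transm_ge {n : ℕ} {G : SimpleGraph (Fin n)} (hG : G.Connected) :
    (n:ℝ) * ((n:ℝ) - 1) ≤ ∑ v, transm G v := by
  calc (n:ℝ) * ((n:ℝ) - 1) = ∑ _v : Fin n, ((n:ℝ) - 1) := by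
        rw [Finset.sum_const, Finset.card_univ, Fintype.card_fin, nsmul_eq_mul]
    _ ≤ ∑ v, transm G v := Finset.sum_le_sum (fun v _ => transm_ge hG v)

lemma top_of_sum_eq {n : ℕ} {G : SimpleGraph (Fin n)} (hG : G.Connected)
    (h : ∑ v, transm G v = (n:ℝ) * ((n:ℝ) - 1)) : G = ⊤ := by
  by_contra hne
  obtain ⟨u, v, huv, hnadj⟩ : ∃ u v : Fin n, u ≠ v ∧ ¬ G.Adj u v := by
    by_contra hno
    push_neg at hno
    apply hne
    ext a b
    simp only [SimpleGraph.top_adj]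
    exact ⟨fun h => h.ne, fun h => hno a b h⟩
  have hstrict : ∑ _x : Fin n, ((n:ℝ) - 1) < ∑ x, transm G x := by
    apply Finset.sum_lt_sum (fun i _ => transm_ge hG i)
    refine ⟨u, mem_univ u, ?_⟩
    have hbound : ∀ y : Fin n,
        ((if u = y then (0:ℝ) else 1) + (if y = v then 1 else 0)) ≤ (G.dist u y : ℝ) := by
      intro y
      by_cases h1 : u = y
      · subst h1
        simp [SimpleGraph.dist_self, if_neg huv]
      · by_cases h2 : y = v
        · subst h2
          rw [if_neg h1, if_pos rfl]
          have hne0 : G.dist u y ≠ 0 := fun hh => h1 (hG.dist_eq_zero_iff.mp hh)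
          have hne1 : G.dist u y ≠ 1 := fun hh => hnadj (SimpleGraph.dist_eq_one_iff_adj.mp hh)
          have h2le : 2 ≤ G.dist u y := by omega
          have : (2:ℝ) ≤ (G.dist u y : ℝ) := by exact_mod_cast h2le
          linarith
        · simp only [if_neg h1, if_neg h2, add_zero]
          exact_mod_cast hG.pos_dist_of_ne h1
    have hsums : ∑ y : Fin n, ((if u = y then (0:ℝ) else 1) + (if y = v then 1 else 0))
        = (n:ℝ) := by
      rw [Finset.sum_add_distrib, ite_sum_eq u, Finset.sum_ite_eq', if_pos (mem_univ v)]
      ring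
    calc (n:ℝ) - 1 < (n:ℝ) := by linarith
      _ = _ := hsums.symm
      _ ≤ transm G u := Finset.sum_le_sum (fun y _ => hbound y)
  rw [Finset.sum_const, Finset.card_univ, Fintype.card_fin, nsmul_eq_mul, h] at hstrict
  linarith

lemma transm_top {n : ℕ} (v : Fin n) : transm (⊤ : SimpleGraph (Fin n)) v = (n:ℝ) - 1 := by
  have hd : ∀ u : Fin n, ((⊤ : SimpleGraph (Fin n)).dist v u : ℝ) = if v = u then 0 else 1 := by
    intro u
    by_cases h : v = u
    · simp [h, SimpleGraph.dist_self]
    · rw [if_neg h, SimpleGraph.dist_eq_one_iff_adj.mpr (by simpa using h)]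
      norm_num
  rw [show transm (⊤ : SimpleGraph (Fin n)) v
      = ∑ u : Fin n, ((⊤ : SimpleGraph (Fin n)).dist v u : ℝ) from rfl,
    Finset.sum_congr rfl fun u _ => hd u, ite_sum_eq v]

lemma mu_top {n : ℕ} (hn : 0 < n) (μ : Fin n → ℝ)
    (hμ : IsDLSpec (⊤ : SimpleGraph (Fin n)) μ) (i : Fin n) :
    μ i = 0 ∨ μ i = (n:ℝ) := by
  obtain ⟨x, hx0, hx⟩ := eigen_of_mu _ μ hμ i
  have hcoord : ∀ a : Fin n, (n:ℝ) * x a - (∑ y, x y) = μ i * x a := by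
    intro a
    have h1 := congrFun hx a
    have hmv : (distLap (⊤ : SimpleGraph (Fin n)) *ᵥ x) a
        = transm (⊤ : SimpleGraph (Fin n)) a * x a
          - ∑ y : Fin n, (((⊤ : SimpleGraph (Fin n)).dist a y : ℝ)) * x y := by
      simp only [distLap, Matrix.sub_mulVec, Pi.sub_apply, Matrix.mulVec_diagonal]
      simp only [Matrix.mulVec, dotProduct, Matrix.of_apply]
    have hsum : ∑ y : Fin n, (((⊤ : SimpleGraph (Fin n)).dist a y : ℝ)) * x y
        = (∑ y, x y) - x a := by
      have hd : ∀ y : Fin n, (((⊤ : SimpleGraph (Fin n)).dist a y : ℝ)) * x y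
          = x y - (if a = y then x y else 0) := by
        intro y
        by_cases h : a = y
        · simp [h, SimpleGraph.dist_self]
        · rw [if_neg h, SimpleGraph.dist_eq_one_iff_adj.mpr (by simpa using h)]
          norm_num
      rw [Finset.sum_congr rfl fun y _ => hd y, Finset.sum_sub_distrib,
        Finset.sum_ite_eq, if_pos (mem_univ a)]
    rw [hmv, hsum, transm_top] at h1
    have h2 : (μ i • x) a = μ i * x a := rfl
    rw [h2] at h1
    linarith
  by_cases hn' : μ i = (n:ℝ)
  · right; exact hn'
  · left
    have hsub : (n:ℝ) - μ i ≠ 0 := fun h => hn' (by linarith [sub_eq_zero.mp h])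
    set c : ℝ := (∑ y, x y) / ((n:ℝ) - μ i) with hc
    have hxa : ∀ a : Fin n, x a = c := by
      intro a
      have := hcoord a
      rw [hc, eq_div_iff hsub]
      linarith
    have hT : (∑ y, x y) = (n:ℝ) * c := by
      rw [Finset.sum_congr rfl fun y _ => hxa y, Finset.sum_const, Finset.card_univ,
        Fintype.card_fin, nsmul_eq_mul]
    have hc0 : c ≠ 0 := by
      intro h0
      apply hx0
      funext a
      rw [hxa a, h0]; rfl
    have a0 : Fin n := ⟨0, hn⟩
    have := hcoord a0
    rw [hxa a0, hT] at this
    have : μ i * c = 0 := by linarith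
    rcases mul_eq_zero.mp this with h | h
    · exact h
    · exact absurd h hc0

theorem dls_lower_wiener_complement_disconnected (n : ℕ) (G : SimpleGraph (Fin n))
    (hG : G.Connected) (hc : ¬ Gᶜ.Connected)
    (μ : Fin n → ℝ) (hμ : IsDLSpec G μ) (hmono : Antitone μ) :
    (2 * wiener G - n * ((n : ℝ) - 1)) / n ≤ μ ⟨0, by have h0 : 0 < n := Fin.pos_iff_nonempty.mpr hG.nonempty; omega⟩ - μ ⟨n - 2, by have h0 : 0 < n := Fin.pos_iff_nonempty.mpr hG.nonempty; omega⟩ ∧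
    (μ ⟨0, by have h0 : 0 < n := Fin.pos_iff_nonempty.mpr hG.nonempty; omega⟩ - μ ⟨n - 2, by have h0 : 0 < n := Fin.pos_iff_nonempty.mpr hG.nonempty; omega⟩ = (2 * wiener G - n * ((n : ℝ) - 1)) / n ↔ G = ⊤) := by
  classical
  have hn0 : 0 < n := Fin.pos_iff_nonempty.mpr hG.nonempty
  have hn2 : 2 ≤ n := by
    rcases Nat.lt_or_ge n 2 with h | h
    · interval_cases n
      exact absurd ((SimpleGraph.connected_iff Gᶜ).mpr
        ⟨fun a b => by rw [Subsingleton.elim a b], hG.nonempty⟩) hc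
    · exact h
  suffices hkey : ∀ a b : Fin n, (a : ℕ) = 0 → (b : ℕ) = n - 2 →
      ((2 * wiener G - n * ((n : ℝ) - 1)) / n ≤ μ a - μ b ∧
        (μ a - μ b = (2 * wiener G - n * ((n : ℝ) - 1)) / n ↔ G = ⊤)) by
    exact hkey _ _ rfl rfl
  intro a b ha hb
  have hw2 : 2 * wiener G = ∑ v, transm G v := by
    rw [show wiener G = (∑ v : Fin n, transm G v) / 2 from rfl]; ring
  set T : ℝ := ∑ v, transm G v with hT
  have hsμ : ∑ i, μ i = T := sum_mu hn0 G μ hμ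
  have hTge : (n:ℝ) * ((n:ℝ) - 1) ≤ T := sum_transm_ge hG
  obtain ⟨j0, hj0⟩ : ∃ j, μ j = 0 := by
    refine exists_mu_eq G μ hμ 0 ⟨fun _ => 1, ?_, distLap_mulVec_one G⟩
    intro hcontr
    have := congrFun hcontr ⟨0, hn0⟩
    norm_num at this
  obtain ⟨jn, hjn⟩ : ∃ i, μ i = (n:ℝ) := exists_mu_eq G μ hμ n (exists_eigen_n G hG hc)
  set lst : Fin n := ⟨n - 1, by omega⟩ with hlst
  have hnR : (0:ℝ) < n := by exact_mod_cast hn0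
  have hn1R : (0:ℝ) < (n:ℝ) - 1 := by
    have : (2:ℝ) ≤ n := by exact_mod_cast hn2
    linarith
  have hμlast : μ lst ≤ 0 := by
    have hle : j0 ≤ lst := by
      rw [Fin.le_def]
      have := j0.isLt
      simp only [hlst]
      omega
    calc μ lst ≤ μ j0 := hmono hle
      _ = 0 := hj0
  have hsum_erase : ∑ i ∈ univ.erase lst, μ i = T - μ lst := by
    have h1 := Finset.sum_erase_add univ μ (mem_univ lst)
    linarith
  have hcard_erase : (univ.erase lst).card = n - 1 := by
    rw [Finset.card_erase_of_mem (mem_univ lst), Finset.card_univ, Fintype.card_fin]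
  have hbound : ∑ i ∈ univ.erase lst, μ i ≤ (n - 1 : ℕ) • μ a := by
    have := Finset.sum_le_card_nsmul (univ.erase lst) μ (μ a)
      (fun i _ => hmono (by rw [Fin.le_def, ha]; omega))
    rwa [hcard_erase] at this
  have hcast1 : ((n - 1 : ℕ) : ℝ) = (n:ℝ) - 1 := by
    rw [Nat.cast_sub (by omega : 1 ≤ n)]; norm_num
  have hbound' : T - μ lst ≤ ((n:ℝ) - 1) * μ a := by
    rw [← hsum_erase]
    calc ∑ i ∈ univ.erase lst, μ i ≤ (n - 1 : ℕ) • μ a := hbound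
      _ = ((n:ℝ) - 1) * μ a := by rw [nsmul_eq_mul, hcast1]
  have hμa : T ≤ ((n:ℝ) - 1) * μ a := by linarith
  have hμb : μ b ≤ (n:ℝ) := by
    have hij : jn < j0 := by
      by_contra hge
      push_neg at hge
      have hmm := hmono hge
      rw [hj0, hjn] at hmm
      linarith
    have hjle : jn ≤ b := by
      rw [Fin.le_def, hb]
      have h1 : (jn : ℕ) < (j0 : ℕ) := hij
      have h2 := j0.isLt
      omega
    calc μ b ≤ μ jn := hmono hjle
      _ = (n:ℝ) := hjn
  have hstep : T / ((n:ℝ) - 1) - (n:ℝ) - (T - (n:ℝ) * ((n:ℝ) - 1)) / n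
      = (T - (n:ℝ) * ((n:ℝ) - 1)) / ((n:ℝ) * ((n:ℝ) - 1)) := by
    field_simp
    ring
  have hA : T / ((n:ℝ) - 1) - (n:ℝ) ≤ μ a - μ b := by
    have h1 : T / ((n:ℝ) - 1) ≤ μ a := by
      rw [div_le_iff₀ hn1R]
      linarith [hμa]
    linarith
  have hB : (T - (n:ℝ) * ((n:ℝ) - 1)) / n ≤ T / ((n:ℝ) - 1) - (n:ℝ) := by
    have hdiffpos : 0 ≤ (T - (n:ℝ) * ((n:ℝ) - 1)) / ((n:ℝ) * ((n:ℝ) - 1)) :=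
      div_nonneg (by linarith) (by positivity)
    linarith
  constructor
  · rw [hw2]
    linarith
  · constructor
    · intro hEq
      rw [hw2] at hEq
      have hT0 : T = (n:ℝ) * ((n:ℝ) - 1) := by
        have h1 : T / ((n:ℝ) - 1) - (n:ℝ) ≤ (T - (n:ℝ) * ((n:ℝ) - 1)) / n := by
          rw [← hEq]; exact hA
        have h2 : (T - (n:ℝ) * ((n:ℝ) - 1)) / ((n:ℝ) * ((n:ℝ) - 1)) ≤ 0 := by linarith
        have h3 : T - (n:ℝ) * ((n:ℝ) - 1) ≤ 0 := by
          by_contra hpos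
          push_neg at hpos
          have := div_pos hpos (by positivity : (0:ℝ) < (n:ℝ) * ((n:ℝ) - 1))
          linarith
        linarith
      exact top_of_sum_eq hG hT0
    · intro hGtop
      subst hGtop
      have hTval : T = (n:ℝ) * ((n:ℝ) - 1) := by
        rw [hT, Finset.sum_congr rfl fun v _ => transm_top v, Finset.sum_const,
          Finset.card_univ, Fintype.card_fin, nsmul_eq_mul]
      have hall : ∀ i : Fin n, μ i = 0 ∨ μ i = (n:ℝ) := mu_top hn0 μ hμ
      have hl0 : μ lst = 0 := by
        rcases hall lst with h | h
        · exact h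
        · exfalso; rw [h] at hμlast; linarith
      have hbn : μ b = (n:ℝ) := by
        rcases hall b with h | h
        · exfalso
          have hblst : b ≠ lst := by
            intro hh
            rw [hh] at hb
            simp only [hlst] at hb
            omega
          have hmemb : b ∈ univ.erase lst := Finset.mem_erase.mpr ⟨hblst, mem_univ b⟩
          have h1 := Finset.sum_erase_add (univ.erase lst) μ hmemb
          have hcardA : ((univ.erase lst).erase b).card = n - 2 := by
            rw [Finset.card_erase_of_mem hmemb, hcard_erase]
            omega
          have hle2 : ∑ i ∈ (univ.erase lst).erase b, μ i ≤ (n - 2 : ℕ) • (n:ℝ) := by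
            rw [← hcardA]
            refine Finset.sum_le_card_nsmul _ μ (n:ℝ) (fun i _ => ?_)
            rcases hall i with h' | h'
            · rw [h']; linarith
            · rw [h']
          rw [nsmul_eq_mul] at hle2
          have hcast2 : ((n - 2 : ℕ) : ℝ) = (n:ℝ) - 2 := by
            rw [Nat.cast_sub hn2]; norm_num
          rw [hcast2] at hle2
          rw [h] at h1
          rw [hTval, hl0] at hsum_erase
          nlinarith
        · exact h
      have han : μ a = (n:ℝ) := by
        rcases hall a with h | h
        · exfalso
          have hab : μ b ≤ μ a := hmono (by rw [Fin.le_def, ha]; omega)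
          rw [h, hbn] at hab
          linarith
        · exact h
      rw [hw2, han, hbn, hTval, sub_self, sub_self, zero_div]
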